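/- Let X be a Polish space. The map μ ↦ sup_{x ∈ X} μ({x}) from Prob(X) (with the weak topology) to [0,1] is upper semicontinuous. -/

import Mathlib

open MeasureTheory Metric Filter Set

open scoped ENNReal NNReal Topology

/-- For a Polish space `X`, the map `μ ↦ sup_{x ∈ X} μ({x})` is upper
semicontinuous on the space of Borel probability measures with the weak
topology. -/
theorem sup_atom_upperSemicontinuous {X : Type*} [TopologicalSpace X] [PolishSpace X]
    [MeasurableSpace X] [BorelSpace X] :
    UpperSemicontinuous (fun μ : ProbabilityMeasure X => ⨆ x : X, (μ {x} : ℝ)) := by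
  intro μ y hy
  by_cases hX : Nonempty X
  swap
  · -- empty space: the function is constantly 0
    have hz : ∀ ν : ProbabilityMeasure X, (⨆ x : X, ((ν {x} : ℝ≥0) : ℝ)) = 0 := by
      intro ν
      haveI : IsEmpty X := not_nonempty_iff.1 hX
      exact Real.iSup_of_isEmpty _
    filter_upwards with ν
    simpa [hz ν] using (hz μ ▸ hy)
  obtain ⟨x₀⟩ := hX
  letI := TopologicalSpace.upgradeIsCompletelyMetrizable X
  have hbdd : BddAbove (Set.range fun x : X => ((μ {x} : ℝ≥0) : ℝ)) := by
    refine ⟨1, ?_⟩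
    rintro _ ⟨x, rfl⟩
    exact_mod_cast μ.apply_le_one {x}
  have hy0 : 0 < y :=
    lt_of_le_of_lt ((μ {x₀}).coe_nonneg.trans (le_ciSup hbdd x₀)) hy
  set y' : ℝ≥0∞ := ENNReal.ofReal y with hy'def
  -- each atom of μ has measure < y'
  have hx_lt : ∀ x : X, (μ : Measure X) {x} < y' := by
    intro x
    have h1 : ((μ {x} : ℝ≥0) : ℝ) < y := lt_of_le_of_lt (le_ciSup hbdd x) hy
    rw [← μ.ennreal_coeFn_eq_coeFn_toMeasure]
    exact (ENNReal.lt_ofReal_iff_toReal_lt (by simp)).2 (by rw [ENNReal.coe_toReal]; exact h1)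
  -- choose a small closed ball around each point of measure < y'
  have hr : ∀ x : X, ∃ r : ℝ, 0 < r ∧ (μ : Measure X) (closedBall x r) < y' := by
    intro x
    have hI : ⋂ n : ℕ, closedBall x (1 / (n + 1)) = {x} := by
      ext z
      simp only [Set.mem_iInter, Metric.mem_closedBall, Set.mem_singleton_iff]
      constructor
      · intro h
        have hd : dist z x ≤ 0 := by
          refine le_of_forall_pos_le_add fun ε hε => ?_
          obtain ⟨n, hn⟩ := exists_nat_one_div_lt hε
          calc dist z x ≤ 1 / (n + 1) := h n
            _ ≤ ε := le_of_lt (by exact_mod_cast hn)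
            _ ≤ 0 + ε := by linarith
        exact dist_le_zero.1 hd
      · rintro rfl n; rw [dist_self]; positivity
    have hanti : Antitone fun n : ℕ => closedBall x (1 / (n + 1)) := by
      intro m n hmn
      apply closedBall_subset_closedBall
      apply div_le_div_of_nonneg_left (by norm_num) (by positivity)
      exact_mod_cast by exact_mod_cast Nat.add_le_add_right hmn 1
    have htend := tendsto_measure_iInter_atTop
      (μ := (μ : Measure X))
      (s := fun n : ℕ => closedBall x (1 / (n + 1)))
      (fun n => measurableSet_closedBall.nullMeasurableSet) hanti
      ⟨0, measure_ne_top _ _⟩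
    rw [hI] at htend
    obtain ⟨n, hn⟩ := (htend.eventually_lt_const (hx_lt x)).exists
    exact ⟨1 / (n + 1), by positivity, hn⟩
  choose r hr0 hrμ using hr
  -- countable subcover of the ball cover
  obtain ⟨T, hTc, hTU⟩ := TopologicalSpace.isOpen_iUnion_countable
    (fun x => ball x (r x)) (fun x => isOpen_ball)
  have hUuniv : ⋃ x ∈ T, ball x (r x) = Set.univ := by
    rw [hTU]
    ext z
    simp only [Set.mem_iUnion, Set.mem_univ, iff_true]
    exact ⟨z, mem_ball_self (hr0 z)⟩
  haveI : Nonempty X := ⟨x₀⟩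
  have hTne : T.Nonempty := by
    rcases Set.eq_empty_or_nonempty T with h | h
    · exfalso
      rw [h] at hUuniv
      simp only [Set.mem_empty_iff_false, Set.iUnion_of_empty, Set.iUnion_empty] at hUuniv
      exact Set.empty_ne_univ hUuniv
    · exact h
  obtain ⟨e, hTe⟩ := hTc.exists_eq_range hTne
  have huniv : ⋃ n : ℕ, ball (e n) (r (e n)) = Set.univ := by
    rw [← hUuniv, hTe]
    ext z
    simp only [Set.mem_iUnion]
    constructor
    · rintro ⟨n, hn⟩; exact ⟨e n, ⟨n, rfl⟩, hn⟩
    · rintro ⟨x, ⟨n, rfl⟩, hn⟩; exact ⟨n, hn⟩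
  -- the complements of finite unions shrink to ∅
  set A : ℕ → Set X := fun n => ⋃ i ∈ Finset.range (n + 1), ball (e i) (r (e i)) with hA
  have hAopen : ∀ n, IsOpen (A n) := fun n =>
    isOpen_biUnion fun i _ => isOpen_ball
  have hCanti : Antitone fun n => (A n)ᶜ := by
    intro m n hmn
    apply Set.compl_subset_compl.2
    apply Set.biUnion_subset_biUnion_left
    intro i hi
    exact Finset.mem_range.2 (lt_of_lt_of_le (Finset.mem_range.1 hi) (by omega))
  have hCiInter : ⋂ n, (A n)ᶜ = ∅ := by
    rw [← Set.compl_iUnion]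
    rw [Set.compl_empty_iff]
    rw [Set.eq_univ_iff_forall]
    intro z
    have : z ∈ ⋃ n, ball (e n) (r (e n)) := huniv.symm ▸ Set.mem_univ z
    obtain ⟨n, hn⟩ := Set.mem_iUnion.1 this
    exact Set.mem_iUnion.2 ⟨n, Set.mem_biUnion (Finset.mem_range.2 (by omega)) hn⟩
  have htendC := tendsto_measure_iInter_atTop (μ := (μ : Measure X))
    (s := fun n => (A n)ᶜ)
    (fun n => ((hAopen n).isClosed_compl.measurableSet).nullMeasurableSet)
    hCanti ⟨0, measure_ne_top _ _⟩
  rw [hCiInter] at htendC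
  have hy'0 : (0 : ℝ≥0∞) < y' := ENNReal.ofReal_pos.2 hy0
  obtain ⟨N, hN⟩ := (htendC.eventually_lt_const (by simpa using hy'0)).exists
  -- portmanteau: closed sets of small μ-measure have small ν-measure nearby
  have key : ∀ F : Set X, IsClosed F → (μ : Measure X) F < y' →
      ∀ᶠ ν : ProbabilityMeasure X in 𝓝 μ, (ν : Measure X) F < y' := by
    intro F hF hμF
    have hls := ProbabilityMeasure.limsup_measure_closed_le_of_tendsto
      (μ := μ) (μs := fun ν : ProbabilityMeasure X => ν) tendsto_id hF
    exact eventually_lt_of_limsup_lt (lt_of_le_of_lt hls hμF)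
  have h1 : ∀ᶠ ν : ProbabilityMeasure X in 𝓝 μ,
      ∀ i ∈ Finset.range (N + 1), (ν : Measure X) (closedBall (e i) (r (e i))) < y' :=
    (Filter.eventually_all_finset _).2 fun i _ =>
      key _ isClosed_closedBall (hrμ (e i))
  filter_upwards [h1, key _ (hAopen N).isClosed_compl hN] with ν hν1 hν2
  -- convert ENNReal bounds to real bounds
  have hconv : ∀ s : Set X, (ν : Measure X) s < y' → ((ν s : ℝ≥0) : ℝ) < y := by
    intro s hs
    rw [← ν.ennreal_coeFn_eq_coeFn_toMeasure] at hs
    have := (ENNReal.lt_ofReal_iff_toReal_lt (by simp)).1 hs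
    rw [ENNReal.coe_toReal] at this; exact this
  -- bound: the max of the finitely many values
  set g : ℕ → ℝ := fun i => ((ν (closedBall (e i) (r (e i))) : ℝ≥0) : ℝ) with hg
  have hne : (Finset.range (N + 1)).Nonempty := ⟨0, Finset.mem_range.2 (by omega)⟩
  set M : ℝ := max ((Finset.range (N + 1)).sup' hne g) ((ν (A N)ᶜ : ℝ≥0) : ℝ) with hM
  have hMy : M < y := by
    apply max_lt
    · exact (Finset.sup'_lt_iff hne).2 fun i hi => hconv _ (hν1 i hi)
    · exact hconv _ hν2
  refine lt_of_le_of_lt (ciSup_le fun x => ?_) hMy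
  by_cases hxA : x ∈ A N
  · obtain ⟨i, hi, hxi⟩ := by
      simpa only [hA, Set.mem_iUnion, exists_prop] using hxA
    have hsub : ({x} : Set X) ⊆ closedBall (e i) (r (e i)) :=
      Set.singleton_subset_iff.2 (ball_subset_closedBall hxi)
    calc ((ν {x} : ℝ≥0) : ℝ) ≤ g i := by exact_mod_cast ν.apply_mono hsub
      _ ≤ (Finset.range (N + 1)).sup' hne g := Finset.le_sup' g hi
      _ ≤ M := le_max_left _ _
  · have hsub : ({x} : Set X) ⊆ (A N)ᶜ := Set.singleton_subset_iff.2 hxA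
    calc ((ν {x} : ℝ≥0) : ℝ) ≤ ((ν (A N)ᶜ : ℝ≥0) : ℝ) := by
          exact_mod_cast ν.apply_mono hsub
      _ ≤ M := le_max_right _ _
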